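/- Let H be a reproducing kernel Hilbert space setting: Φ : X → ℍ a feature map into a Hilbert space ℍ, and H = {x ↦ ⟨w, Φ(x)⟩ : w ∈ ℍ}. Let Q : ℍ → ℍ be any weight approximation map and define Af_w(x) = ⟨Q(w), Φ(x)⟩. Then for any sample S = {x_1,...,x_m} ⊂ X, the empirical Rademacher complexity of the sensitivity class DH = {x ↦ |f(x) − Af(x)| : f ∈ H} satisfies R̂_S(DH) ≤ (sup_{w∈ℍ} ‖w − Q(w)‖_ℍ / m) · (Σ_{k=1}^m ‖Φ(x_k)‖²_ℍ)^{1/2}. In particular, this bound depends only on the weight distortion ‖w − Q(w)‖ and not on ‖w‖. -/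

import Mathlib

open Finset RealInnerProductSpace

noncomputable def sgn (b : Bool) : ℝ := if b then 1 else -1

/-- Empirical Rademacher complexity of a function class `F` on the sample `s`. -/
noncomputable def empRad {X : Type*} (m : ℕ) (s : Fin m → X) (F : Set (X → ℝ)) : ℝ :=
  (1 / m) * ((1 / 2 ^ m) *
    ∑ ε : Fin m → Bool, sSup ((fun f => ∑ k, sgn (ε k) * f (s k)) '' F))


lemma sgn_mul_le_abs (b : Bool) (t : ℝ) : sgn b * t ≤ |t| := by
  cases b <;> simp [sgn]
  · exact neg_le_abs t
  · exact le_abs_self t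

lemma sgn_true : sgn true = 1 := rfl
lemma sgn_false : sgn false = -1 := rfl

lemma abs_sgn_mul (b : Bool) (t : ℝ) : |sgn b * t| = |t| := by
  cases b <;> simp [sgn]

lemma sum_pi_succ {n : ℕ} {M : Type*} [AddCommMonoid M] (f : (Fin (n+1) → Bool) → M) :
    ∑ ε : Fin (n+1) → Bool, f ε = ∑ b : Bool, ∑ ε' : Fin n → Bool, f (Fin.cons b ε') := by
  calc ∑ ε : Fin (n+1) → Bool, f ε
      = ∑ p : Bool × (Fin n → Bool), f (Fin.cons p.1 p.2) :=
        Fintype.sum_equiv (Fin.consEquiv fun _ => Bool).symm _ _ (fun ε => by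
          simp [Fin.consEquiv])
    _ = ∑ b : Bool, ∑ ε' : Fin n → Bool, f (Fin.cons b ε') := Fintype.sum_prod_type _

lemma key_step {ι : Type*} [Nonempty ι] (f R : ι → ℝ)
    (h1 : BddAbove (Set.range fun i => f i + R i))
    (h2 : BddAbove (Set.range fun i => -f i + R i)) :
    ((⨆ i, (|f i| + R i)) + ⨆ i, (-|f i| + R i)) ≤
      (⨆ i, (f i + R i)) + ⨆ i, (-f i + R i) := by
  set c := (⨆ i, (f i + R i)) + ⨆ i, (-f i + R i) with hc
  have H : ∀ i j, (|f i| + R i) + (-|f j| + R j) ≤ c := by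
    intro i j
    rcases le_or_gt 0 (f i) with h | h
    · have hi : |f i| = f i := abs_of_nonneg h
      have hj : -|f j| ≤ -f j := by have := le_abs_self (f j); linarith
      calc (|f i| + R i) + (-|f j| + R j) ≤ (f i + R i) + (-f j + R j) := by
            rw [hi]; linarith
        _ ≤ c := add_le_add (le_ciSup h1 i) (le_ciSup h2 j)
    · have hi : |f i| = -f i := abs_of_neg h
      have hj : -|f j| ≤ f j := by have := neg_abs_le (f j); linarith
      calc (|f i| + R i) + (-|f j| + R j) ≤ (-f i + R i) + (f j + R j) := by
            rw [hi]; linarith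
        _ ≤ (⨆ i, (-f i + R i)) + ⨆ i, (f i + R i) :=
            add_le_add (le_ciSup h2 i) (le_ciSup h1 j)
        _ = c := add_comm _ _
  have h3 : (⨆ i, (|f i| + R i)) ≤ c - ⨆ i, (-|f i| + R i) := by
    apply ciSup_le
    intro i
    have : (⨆ j, (-|f j| + R j)) ≤ c - (|f i| + R i) :=
      ciSup_le fun j => by linarith [H i j]
    linarith
  linarith

lemma contraction {ι : Type*} [Nonempty ι] :
    ∀ (n : ℕ) (a : Fin n → ι → ℝ) (h : ι → ℝ) (M : ℝ),
      (∀ i, |h i| + ∑ k, |a k i| ≤ M) →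
      ∑ ε : Fin n → Bool, (⨆ i, (h i + ∑ k, sgn (ε k) * |a k i|)) ≤
        ∑ ε : Fin n → Bool, (⨆ i, (h i + ∑ k, sgn (ε k) * a k i)) := by
  intro n
  induction n with
  | zero => intro a h M hM; simp
  | succ n IH =>
    intro a h M hM
    -- boundedness helper
    have hb : ∀ (g : ι → ℝ), (∀ i, g i ≤ M) → BddAbove (Set.range g) := by
      intro g hg
      exact ⟨M, by rintro x ⟨i, rfl⟩; exact hg i⟩
    have habs : ∀ (ε' : Fin n → Bool) i,
        abs (∑ k : Fin n, sgn (ε' k) * |a k.succ i|) ≤ ∑ k : Fin n, |a k.succ i| := by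
      intro ε' i
      calc abs (∑ k : Fin n, sgn (ε' k) * |a k.succ i|)
            ≤ ∑ k : Fin n, abs (sgn (ε' k) * |a k.succ i|) :=
            Finset.abs_sum_le_sum_abs _ _
        _ = ∑ k : Fin n, |a k.succ i| := by
            simp only [abs_sgn_mul, abs_abs]
    have hMi : ∀ i, |h i| + (|a 0 i| + ∑ k : Fin n, |a k.succ i|) ≤ M := by
      intro i
      have := hM i
      rwa [Fin.sum_univ_succ] at this
    have hRle : ∀ (ε' : Fin n → Bool) i,
        (∑ k : Fin n, sgn (ε' k) * |a k.succ i|) ≤ ∑ k : Fin n, |a k.succ i| := by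
      intro ε' i
      apply Finset.sum_le_sum
      intro k _
      calc sgn (ε' k) * |a k.succ i| ≤ |(|a k.succ i|)| := sgn_mul_le_abs _ _
        _ = |a k.succ i| := abs_abs _
    rw [sum_pi_succ, sum_pi_succ, Fintype.sum_bool, Fintype.sum_bool]
    have step1 : ∀ ε' : Fin n → Bool,
        ((⨆ i, (h i + ∑ k : Fin (n+1), sgn ((Fin.cons true ε' : Fin (n+1) → Bool) k) * |a k i|)) +
          ⨆ i, (h i + ∑ k : Fin (n+1), sgn ((Fin.cons false ε' : Fin (n+1) → Bool) k) * |a k i|)) ≤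
        (⨆ i, ((h i + a 0 i) + ∑ k : Fin n, sgn (ε' k) * |a k.succ i|)) +
          ⨆ i, ((h i + -(a 0 i)) + ∑ k : Fin n, sgn (ε' k) * |a k.succ i|) := by
      intro ε'
      set R : ι → ℝ := fun i => h i + ∑ k : Fin n, sgn (ε' k) * |a k.succ i| with hR
      have e1 : (⨆ i, (h i + ∑ k : Fin (n+1), sgn ((Fin.cons true ε' : Fin (n+1) → Bool) k) * |a k i|))
          = ⨆ i, (|a 0 i| + R i) := by
        congr 1; funext i
        rw [Fin.sum_univ_succ]
        simp only [Fin.cons_zero, Fin.cons_succ, sgn_true, sgn_false, hR]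
        ring
      have e2 : (⨆ i, (h i + ∑ k : Fin (n+1), sgn ((Fin.cons false ε' : Fin (n+1) → Bool) k) * |a k i|))
          = ⨆ i, (-|a 0 i| + R i) := by
        congr 1; funext i
        rw [Fin.sum_univ_succ]
        simp only [Fin.cons_zero, Fin.cons_succ, sgn_true, sgn_false, hR]
        ring
      have b1 : BddAbove (Set.range fun i => a 0 i + R i) := by
        apply hb
        intro i
        have := hRle ε' i
        have h0 : a 0 i ≤ |a 0 i| := le_abs_self _
        have hh : h i ≤ |h i| := le_abs_self _
        have := hMi i
        simp only [hR]
        linarith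
      have b2 : BddAbove (Set.range fun i => -(a 0 i) + R i) := by
        apply hb
        intro i
        have := hRle ε' i
        have h0 : -(a 0 i) ≤ |a 0 i| := neg_le_abs _
        have hh : h i ≤ |h i| := le_abs_self _
        have := hMi i
        simp only [hR]
        linarith
      rw [e1, e2]
      refine le_trans (key_step (fun i => a 0 i) R b1 b2) (le_of_eq ?_)
      congr 1
      · congr 1; funext i; simp only [hR]; ring
      · congr 1; funext i; simp only [hR]; ring
    calc (∑ ε' : Fin n → Bool, ⨆ i, (h i + ∑ k : Fin (n+1), sgn ((Fin.cons true ε' : Fin (n+1) → Bool) k) * |a k i|)) +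
          ∑ ε' : Fin n → Bool, ⨆ i, (h i + ∑ k : Fin (n+1), sgn ((Fin.cons false ε' : Fin (n+1) → Bool) k) * |a k i|)
        = ∑ ε' : Fin n → Bool,
            ((⨆ i, (h i + ∑ k : Fin (n+1), sgn ((Fin.cons true ε' : Fin (n+1) → Bool) k) * |a k i|)) +
              ⨆ i, (h i + ∑ k : Fin (n+1), sgn ((Fin.cons false ε' : Fin (n+1) → Bool) k) * |a k i|)) :=
          (Finset.sum_add_distrib).symm
      _ ≤ ∑ ε' : Fin n → Bool,
            ((⨆ i, ((h i + a 0 i) + ∑ k : Fin n, sgn (ε' k) * |a k.succ i|)) +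
              ⨆ i, ((h i + -(a 0 i)) + ∑ k : Fin n, sgn (ε' k) * |a k.succ i|)) :=
          Finset.sum_le_sum fun ε' _ => step1 ε'
      _ = (∑ ε' : Fin n → Bool, ⨆ i, ((h i + a 0 i) + ∑ k : Fin n, sgn (ε' k) * |a k.succ i|)) +
            ∑ ε' : Fin n → Bool, ⨆ i, ((h i + -(a 0 i)) + ∑ k : Fin n, sgn (ε' k) * |a k.succ i|) :=
          Finset.sum_add_distrib
      _ ≤ (∑ ε' : Fin n → Bool, ⨆ i, ((h i + a 0 i) + ∑ k : Fin n, sgn (ε' k) * a k.succ i)) +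
            ∑ ε' : Fin n → Bool, ⨆ i, ((h i + -(a 0 i)) + ∑ k : Fin n, sgn (ε' k) * a k.succ i) := by
          apply add_le_add
          · apply IH (fun k => a k.succ) (fun i => h i + a 0 i) M
            intro i
            have h1 : |h i + a 0 i| ≤ |h i| + |a 0 i| := abs_add_le _ _
            have := hMi i
            linarith
          · apply IH (fun k => a k.succ) (fun i => h i + -(a 0 i)) M
            intro i
            have h1 : |h i + -(a 0 i)| ≤ |h i| + |a 0 i| := by
              have := abs_add_le (h i) (-(a 0 i))
              rwa [abs_neg] at this
            have := hMi i
            linarith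
      _ = (∑ ε' : Fin n → Bool, ⨆ i, (h i + ∑ k : Fin (n+1), sgn ((Fin.cons true ε' : Fin (n+1) → Bool) k) * a k i)) +
            ∑ ε' : Fin n → Bool, ⨆ i, (h i + ∑ k : Fin (n+1), sgn ((Fin.cons false ε' : Fin (n+1) → Bool) k) * a k i) := by
          congr 1
          all_goals
            apply Finset.sum_congr rfl
            intro ε' _
            congr 1
            funext i
            rw [Fin.sum_univ_succ]
            simp only [Fin.cons_zero, Fin.cons_succ, sgn_true, sgn_false]
            ring

lemma sum_norm_sq {H : Type*} [NormedAddCommGroup H] [InnerProductSpace ℝ H] :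
    ∀ (n : ℕ) (Ψ : Fin n → H),
      ∑ ε : Fin n → Bool, ‖∑ k, sgn (ε k) • Ψ k‖^2 = 2^n * ∑ k, ‖Ψ k‖^2 := by
  intro n
  induction n with
  | zero => intro Ψ; simp
  | succ n IH =>
    intro Ψ
    have key : ∀ v : H, ‖Ψ 0 + v‖^2 + ‖-Ψ 0 + v‖^2 = 2*‖Ψ 0‖^2 + 2*‖v‖^2 := by
      intro v
      have h1 := norm_add_sq_real (Ψ 0) v
      have h2 : ‖-Ψ 0 + v‖^2 = ‖v - Ψ 0‖^2 := by rw [neg_add_eq_sub]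
      have h3 := norm_sub_sq_real v (Ψ 0)
      have h4 : ⟪v, Ψ 0⟫ = ⟪Ψ 0, v⟫ := real_inner_comm _ _
      rw [h1, h2, h3, h4]; ring
    have e : ∀ (b : Bool) (ε' : Fin n → Bool),
        (∑ k : Fin (n+1), sgn ((Fin.cons b ε' : Fin (n+1) → Bool) k) • Ψ k)
          = sgn b • Ψ 0 + ∑ k : Fin n, sgn (ε' k) • Ψ k.succ := by
      intro b ε'; rw [Fin.sum_univ_succ]; simp
    rw [sum_pi_succ, Fintype.sum_bool, ← Finset.sum_add_distrib]
    have e2 : ∀ ε' : Fin n → Bool,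
        ‖∑ k : Fin (n+1), sgn ((Fin.cons true ε' : Fin (n+1) → Bool) k) • Ψ k‖^2 +
          ‖∑ k : Fin (n+1), sgn ((Fin.cons false ε' : Fin (n+1) → Bool) k) • Ψ k‖^2
        = 2*‖Ψ 0‖^2 + 2*‖∑ k : Fin n, sgn (ε' k) • Ψ k.succ‖^2 := by
      intro ε'
      rw [e true ε', e false ε']
      simp only [sgn_true, sgn_false, one_smul, neg_one_smul]
      exact key _
    rw [Finset.sum_congr rfl (fun ε' _ => e2 ε'), Finset.sum_add_distrib,
      Finset.sum_const, ← Finset.mul_sum, IH (fun k => Ψ k.succ), Fin.sum_univ_succ]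
    have hcard : (univ : Finset (Fin n → Bool)).card = 2^n := by
      simp [Finset.card_univ]
    rw [hcard]
    ring

/-- For generalised linear predictors `f_w(x) = ⟨w, Φ(x)⟩` with weight
approximation `Af_w(x) = ⟨Q(w), Φ(x)⟩`, the empirical Rademacher complexity of
the sensitivity class is bounded by
`(sup_w ‖w − Q(w)‖ / m) · (Σ_k ‖Φ(x_k)‖²)^{1/2}`, depending only on the weight
distortion and not on `‖w‖`. -/
theorem stmt9 {X : Type*} {H : Type*} [NormedAddCommGroup H] [InnerProductSpace ℝ H]
    (Φ : X → H) (Q : H → H) (m : ℕ) (hm : 0 < m) (s : Fin m → X)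
    (hbdd : BddAbove (Set.range fun w : H => ‖w - Q w‖)) :
    empRad m s
        (Set.range fun w : H => fun x : X => |⟪w, Φ x⟫ - ⟪Q w, Φ x⟫|) ≤
      sSup (Set.range fun w : H => ‖w - Q w‖) / m *
        Real.sqrt (∑ k, ‖Φ (s k)‖ ^ 2) := by
  classical
  set C := sSup (Set.range fun w : H => ‖w - Q w‖) with hCdef
  have hCw : ∀ w : H, ‖w - Q w‖ ≤ C := fun w => le_csSup hbdd ⟨w, rfl⟩
  have hC0 : 0 ≤ C := le_trans (norm_nonneg _) (hCw 0)
  set T := ∑ k, ‖Φ (s k)‖ ^ 2 with hT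
  have hT0 : 0 ≤ T := Finset.sum_nonneg fun k _ => sq_nonneg _
  set ι := {u : H // ‖u‖ ≤ C} with hι
  haveI : Nonempty ι := ⟨⟨0, by simpa using hC0⟩⟩
  set a : Fin m → ι → ℝ := fun k u => ⟪(u : H), Φ (s k)⟫ with ha
  have haM : ∀ (k : Fin m) (u : ι), |a k u| ≤ C * ‖Φ (s k)‖ := by
    intro k u
    calc |a k u| ≤ ‖(u : H)‖ * ‖Φ (s k)‖ := abs_real_inner_le_norm _ _
      _ ≤ C * ‖Φ (s k)‖ := mul_le_mul_of_nonneg_right u.2 (norm_nonneg _)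
  set M := ∑ k, C * ‖Φ (s k)‖ with hMdef
  have hMa : ∀ u : ι, |(0:ℝ)| + ∑ k, |a k u| ≤ M := by
    intro u
    simp only [abs_zero, zero_add, hMdef]
    exact Finset.sum_le_sum fun k _ => haM k u
  -- boundedness of the abs-suprema
  have bAbs : ∀ ε : Fin m → Bool,
      BddAbove (Set.range fun u : ι => ∑ k, sgn (ε k) * |a k u|) := by
    intro ε
    refine ⟨M, ?_⟩
    rintro x ⟨u, rfl⟩
    calc ∑ k, sgn (ε k) * |a k u| ≤ ∑ k, |a k u| := by
          apply Finset.sum_le_sum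
          intro k _
          calc sgn (ε k) * |a k u| ≤ |(|a k u|)| := sgn_mul_le_abs _ _
            _ = |a k u| := abs_abs _
      _ ≤ M := by
          have := hMa u; simpa using this
  -- Step A : per-ε bound of the sSup by the ball supremum
  have stepA : ∀ ε : Fin m → Bool,
      sSup ((fun f => ∑ k, sgn (ε k) * f (s k)) ''
          (Set.range fun w : H => fun x : X => |⟪w, Φ x⟫ - ⟪Q w, Φ x⟫|)) ≤
        ⨆ u : ι, ∑ k, sgn (ε k) * |a k u| := by
    intro ε
    apply csSup_le
    · exact (Set.range_nonempty _).image _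
    · rintro y ⟨f, ⟨w, rfl⟩, rfl⟩
      have hw : ‖w - Q w‖ ≤ C := hCw w
      have : (∑ k, sgn (ε k) * |⟪w, Φ (s k)⟫ - ⟪Q w, Φ (s k)⟫|)
          = ∑ k, sgn (ε k) * |a k ⟨w - Q w, hw⟩| := by
        apply Finset.sum_congr rfl
        intro k _
        show sgn (ε k) * |⟪w, Φ (s k)⟫ - ⟪Q w, Φ (s k)⟫|
            = sgn (ε k) * |⟪w - Q w, Φ (s k)⟫|
        rw [inner_sub_left]
      rw [show (fun f : X → ℝ => ∑ k, sgn (ε k) * f (s k))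
            (fun x : X => |⟪w, Φ x⟫ - ⟪Q w, Φ x⟫|)
          = ∑ k, sgn (ε k) * |⟪w, Φ (s k)⟫ - ⟪Q w, Φ (s k)⟫| from rfl, this]
      exact le_ciSup (bAbs ε) _
  -- contraction (with zero offset)
  have hcontr :
      ∑ ε : Fin m → Bool, (⨆ u : ι, ∑ k, sgn (ε k) * |a k u|) ≤
        ∑ ε : Fin m → Bool, (⨆ u : ι, ∑ k, sgn (ε k) * a k u) := by
    have := contraction m a (fun _ => 0) M hMa
    simpa using this
  -- Cauchy–Schwarz in H per ε
  set v : (Fin m → Bool) → H := fun ε => ∑ k, sgn (ε k) • Φ (s k) with hv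
  have stepB : ∀ ε : Fin m → Bool,
      (⨆ u : ι, ∑ k, sgn (ε k) * a k u) ≤ C * ‖v ε‖ := by
    intro ε
    apply ciSup_le
    intro u
    have e : (∑ k, sgn (ε k) * a k u) = ⟪(u : H), v ε⟫ := by
      rw [hv, inner_sum]
      apply Finset.sum_congr rfl
      intro k _
      rw [real_inner_smul_right, ha]
    rw [e]
    calc ⟪(u : H), v ε⟫ ≤ ‖(u : H)‖ * ‖v ε‖ := real_inner_le_norm _ _
      _ ≤ C * ‖v ε‖ := mul_le_mul_of_nonneg_right u.2 (norm_nonneg _)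
  -- sum of norms bound
  have hcard : (univ : Finset (Fin m → Bool)).card = 2 ^ m := by
    simp [Finset.card_univ]
  have hX0 : (0:ℝ) ≤ ∑ ε : Fin m → Bool, ‖v ε‖ :=
    Finset.sum_nonneg fun ε _ => norm_nonneg _
  have hsq : (∑ ε : Fin m → Bool, ‖v ε‖) ^ 2 ≤ (2:ℝ) ^ m * ((2:ℝ) ^ m * T) := by
    have hcs := Finset.sum_mul_sq_le_sq_mul_sq univ (fun _ : Fin m → Bool => (1:ℝ))
      (fun ε => ‖v ε‖)
    have hns : ∑ ε : Fin m → Bool, ‖v ε‖ ^ 2 = 2 ^ m * T := sum_norm_sq m _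
    simp only [one_mul, one_pow] at hcs
    rw [Finset.sum_const, hcard] at hcs
    calc (∑ ε : Fin m → Bool, ‖v ε‖) ^ 2
        ≤ ((2:ℕ) ^ m • (1:ℝ)) * ∑ ε : Fin m → Bool, ‖v ε‖ ^ 2 := hcs
      _ = (2:ℝ) ^ m * ((2:ℝ) ^ m * T) := by
          rw [hns]; ring_nf
  have hsum_norm : (∑ ε : Fin m → Bool, ‖v ε‖) ≤ 2 ^ m * Real.sqrt T := by
    have h1 : (∑ ε : Fin m → Bool, ‖v ε‖) = Real.sqrt ((∑ ε : Fin m → Bool, ‖v ε‖) ^ 2) :=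
      (Real.sqrt_sq hX0).symm
    rw [h1]
    calc Real.sqrt ((∑ ε : Fin m → Bool, ‖v ε‖) ^ 2)
        ≤ Real.sqrt (((2:ℝ) ^ m) ^ 2 * T) := by
          apply Real.sqrt_le_sqrt
          calc (∑ ε : Fin m → Bool, ‖v ε‖) ^ 2 ≤ (2:ℝ) ^ m * ((2:ℝ) ^ m * T) := hsq
            _ = ((2:ℝ) ^ m) ^ 2 * T := by ring
      _ = 2 ^ m * Real.sqrt T := by
          rw [Real.sqrt_mul (sq_nonneg _), Real.sqrt_sq (by positivity : (0:ℝ) ≤ (2:ℝ)^m)]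
  -- put everything together
  have main : (∑ ε : Fin m → Bool,
      sSup ((fun f => ∑ k, sgn (ε k) * f (s k)) ''
        (Set.range fun w : H => fun x : X => |⟪w, Φ x⟫ - ⟪Q w, Φ x⟫|)))
      ≤ 2 ^ m * (C * Real.sqrt T) := by
    calc (∑ ε : Fin m → Bool, sSup _)
        ≤ ∑ ε : Fin m → Bool, (⨆ u : ι, ∑ k, sgn (ε k) * |a k u|) :=
          Finset.sum_le_sum fun ε _ => stepA ε
      _ ≤ ∑ ε : Fin m → Bool, (⨆ u : ι, ∑ k, sgn (ε k) * a k u) := hcontr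
      _ ≤ ∑ ε : Fin m → Bool, C * ‖v ε‖ := Finset.sum_le_sum fun ε _ => stepB ε
      _ = C * ∑ ε : Fin m → Bool, ‖v ε‖ := by rw [Finset.mul_sum]
      _ ≤ C * (2 ^ m * Real.sqrt T) := mul_le_mul_of_nonneg_left hsum_norm hC0
      _ = 2 ^ m * (C * Real.sqrt T) := by ring
  have hm' : (0:ℝ) < (m:ℝ) := by exact_mod_cast hm
  have h2m : (0:ℝ) < (2:ℝ) ^ m := by positivity
  show (1 / (m:ℝ)) * ((1 / 2 ^ m) * ∑ ε : Fin m → Bool,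
      sSup ((fun f => ∑ k, sgn (ε k) * f (s k)) ''
        (Set.range fun w : H => fun x : X => |⟪w, Φ x⟫ - ⟪Q w, Φ x⟫|)))
      ≤ C / m * Real.sqrt T
  calc (1 / (m:ℝ)) * ((1 / 2 ^ m) * ∑ ε : Fin m → Bool,
        sSup ((fun f => ∑ k, sgn (ε k) * f (s k)) ''
          (Set.range fun w : H => fun x : X => |⟪w, Φ x⟫ - ⟪Q w, Φ x⟫|)))
      ≤ (1 / (m:ℝ)) * ((1 / 2 ^ m) * (2 ^ m * (C * Real.sqrt T))) := by
        apply mul_le_mul_of_nonneg_left _ (by positivity)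
        exact mul_le_mul_of_nonneg_left main (by positivity)
    _ = C / m * Real.sqrt T := by
        field_simp
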